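/- Lemma 2 (the Greedy-RP pricing scheme determines critical-value payments): fix a family of bids B and a winner j ∈ W(B) with payment p_j determined by GRP-P. Keeping the bundle d_j and all the other bids fixed, if bid j instead reports any valuation v' with v' > p_j then index j is granted by GRP-A in the modified family, and if it reports any valuation v' with 0 ≤ v' < p_j then index j is not granted. -/

import Mathlib

open Classical Finset

noncomputable section

/-- A bundle: requested amounts of each of the `k` VM types. -/
abbrev Bundle (k : ℕ) := Fin k → ℕ

/-- A bid: a bundle together with a declared valuation. -/
abbrev Bid (k : ℕ) := Bundle k × ℝ

/-- A bundle is nonzero if some coordinate is positive. -/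
def nonzeroBundle {k : ℕ} (d : Bundle k) : Prop := ∃ i, 0 < d i

/-- A valid bid requests a nonzero bundle and declares a nonnegative valuation. -/
def validBid {k : ℕ} (b : Bid k) : Prop := nonzeroBundle b.1 ∧ 0 ≤ b.2

/-- The weighted bundle size `d̂(d) = Σ_i (d i)·(f i)`. -/
def dhat {k : ℕ} (f : Fin k → ℝ) (d : Bundle k) : ℝ := ∑ i, (d i : ℝ) * f i

/-- The bundle reserve price `ô(d) = Σ_i (d i)·(o i)`. -/
def ohat {k : ℕ} (o : Fin k → ℝ) (d : Bundle k) : ℝ := ∑ i, (d i : ℝ) * o i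

/-- The bid density `e(d, v) = v / (d̂ d)^q`. -/
def density {k : ℕ} (f : Fin k → ℝ) (q : ℝ) (b : Bid k) : ℝ := b.2 / (dhat f b.1) ^ q

/-- The indices of the active set `A`, sorted in non-increasing order of bid density;
`mergeSort` is stable and `A.sort (· ≤ ·)` lists indices increasingly, so ties are
broken by smaller index first. -/
def sortedBids {k n : ℕ} (f : Fin k → ℝ) (q : ℝ) (B : Fin n → Bid k) (A : Finset (Fin n)) :
    List (Fin n) :=
  (A.sort (· ≤ ·)).mergeSort (fun i j => decide (density f q (B j) ≤ density f q (B i)))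

/-- Greedy-RP allocation scheme (GRP-A) run on the active index set `A`: process the
indices in non-increasing density order and grant an index whenever both the available
resource constraint (ARC) and the reserve price constraint (RPC) hold. -/
def grants {k n : ℕ} (o f : Fin k → ℝ) (s : Fin k → ℕ) (q : ℝ) (B : Fin n → Bid k)
    (A : Finset (Fin n)) : Finset (Fin n) :=
  (sortedBids f q B A).foldl
    (fun W j =>
      if (∀ i, (B j).1 i + ∑ j' ∈ W, (B j').1 i ≤ s i) ∧ ohat o (B j).1 ≤ (B j).2
      then insert j W else W) ∅

/-- `W(B)`: the winners of GRP-A run on all bids. -/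
def winners {k n : ℕ} (o f : Fin k → ℝ) (s : Fin k → ℕ) (q : ℝ) (B : Fin n → Bid k) :
    Finset (Fin n) :=
  grants o f s q B Finset.univ

/-- `W'_j = W(B_{-j}) \ W(B)`: the new winners once bid `j` is removed. -/
def competitorSet {k n : ℕ} (o f : Fin k → ℝ) (s : Fin k → ℕ) (q : ℝ) (B : Fin n → Bid k)
    (j : Fin n) : Finset (Fin n) :=
  grants o f s q B (Finset.univ.erase j) \ winners o f s q B

/-- The competitor density `e_j^comp`: the maximum density over `W'_j`, or `0` if
`W'_j` is empty. -/
def ecomp {k n : ℕ} (o f : Fin k → ℝ) (s : Fin k → ℕ) (q : ℝ) (B : Fin n → Bid k)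
    (j : Fin n) : ℝ :=
  if h : (competitorSet o f s q B j).Nonempty
  then (competitorSet o f s q B j).sup' h (fun i => density f q (B i))
  else 0

/-- The bid-specific reserve density `e_res(b) = ô(d)/(d̂ d)^q`. -/
def eres {k : ℕ} (o f : Fin k → ℝ) (q : ℝ) (b : Bid k) : ℝ := ohat o b.1 / (dhat f b.1) ^ q

/-- Greedy-RP pricing scheme (GRP-P): a winner `j` pays
`p_j = max(e_j^comp, e_res(b_j)) · (d̂ d_j)^q`; a non-winner pays `0`. -/
def payment {k n : ℕ} (o f : Fin k → ℝ) (s : Fin k → ℕ) (q : ℝ) (B : Fin n → Bid k)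
    (j : Fin n) : ℝ :=
  if j ∈ winners o f s q B
  then max (ecomp o f s q B j) (eres o f q (B j)) * (dhat f (B j).1) ^ q
  else 0

namespace GRPaux

variable {k n : ℕ}

/-- The strict processing order of GRP-A: higher density first, ties broken by
smaller index. -/
def prec (f : Fin k → ℝ) (q : ℝ) (B : Fin n → Bid k) (x y : Fin n) : Prop :=
  density f q (B y) < density f q (B x) ∨
    (density f q (B x) = density f q (B y) ∧ x < y)

variable {f : Fin k → ℝ} {q : ℝ} {B B' : Fin n → Bid k} {o : Fin k → ℝ} {s : Fin k → ℕ}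

lemma prec_irrefl (x : Fin n) : ¬ prec f q B x x := by
  simp [prec]

lemma prec_trans {x y z : Fin n} (h1 : prec f q B x y) (h2 : prec f q B y z) :
    prec f q B x z := by
  rcases h1 with h1 | ⟨h1, h1'⟩ <;> rcases h2 with h2 | ⟨h2, h2'⟩
  · exact Or.inl (h2.trans h1)
  · exact Or.inl (h2 ▸ h1)
  · exact Or.inl (lt_of_lt_of_le h2 (le_of_eq h1.symm))
  · exact Or.inr ⟨h1.trans h2, h1'.trans h2'⟩

lemma prec_asymm {x y : Fin n} (h : prec f q B x y) : ¬ prec f q B y x :=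
  fun h' => prec_irrefl x (prec_trans h h')

lemma prec_total {x y : Fin n} (h : x ≠ y) : prec f q B x y ∨ prec f q B y x := by
  rcases lt_trichotomy (density f q (B x)) (density f q (B y)) with hd | hd | hd
  · exact Or.inr (Or.inl hd)
  · rcases lt_or_gt_of_ne h with hxy | hxy
    · exact Or.inl (Or.inr ⟨hd, hxy⟩)
    · exact Or.inr (Or.inr ⟨hd.symm, hxy⟩)
  · exact Or.inl (Or.inl hd)

lemma prec_density_le {x y : Fin n} (h : prec f q B x y) :
    density f q (B y) ≤ density f q (B x) := by
  rcases h with h | ⟨h, _⟩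
  · exact h.le
  · exact h.ge

lemma prec_ne {x y : Fin n} (h : prec f q B x y) : x ≠ y := by
  intro h'
  subst h'
  exact prec_irrefl x h

/-- A pair listed against the order of a sorted list: impossible extraction. -/
lemma pair_sublist_of_sorted {α : Type*} [LinearOrder α] :
    ∀ {l : List α}, l.Pairwise (· ≤ ·) → ∀ {x y : α}, x ∈ l → y ∈ l → x < y →
      List.Sublist [x, y] l := by
  intro l
  induction l with
  | nil => intro _ x y hx; simp at hx
  | cons a t ih =>
    intro hl x y hx hy hxy
    rcases List.mem_cons.mp hx with rfl | hx2
    · have hy' : y ∈ t := by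
        rcases List.mem_cons.mp hy with rfl | h
        · exact absurd hxy (lt_irrefl _)
        · exact h
      exact (List.singleton_sublist.mpr hy').cons₂ x
    · have hy' : y ∈ t := by
        rcases List.mem_cons.mp hy with hya | h
        · exact absurd (lt_of_lt_of_le hxy
            (hya ▸ List.rel_of_pairwise_cons hl hx2)) (lt_irrefl _)
        · exact h
      exact (ih hl.of_cons hx2 hy' hxy).cons a

lemma not_pair_sublist_both {α : Type*} :
    ∀ {l : List α}, l.Nodup → ∀ {a b : α}, a ≠ b →
      List.Sublist [a, b] l → List.Sublist [b, a] l → False := by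
  intro l
  induction l with
  | nil => intro _ a b _ h1; simp at h1
  | cons h t ih =>
    intro hnd a b hab h1 h2
    cases h1 with
    | cons _ h1' =>
      cases h2 with
      | cons _ h2' => exact ih (List.nodup_cons.mp hnd).2 hab h1' h2'
      | cons_cons h2' =>
        exact (List.nodup_cons.mp hnd).1 (h1'.subset (by simp))
    | cons_cons h1' =>
      cases h2 with
      | cons _ h2' =>
        exact (List.nodup_cons.mp hnd).1 (h2'.subset (by simp))
      | cons_cons h2' => exact hab rfl

lemma mem_sortedBids {A : Finset (Fin n)} {x : Fin n} :
    x ∈ sortedBids f q B A ↔ x ∈ A := by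
  unfold sortedBids
  rw [List.mem_mergeSort, Finset.mem_sort]

lemma nodup_sortedBids {A : Finset (Fin n)} : (sortedBids f q B A).Nodup :=
  ((List.mergeSort_perm _ _).nodup_iff).mpr (A.sort_nodup _)

lemma sortedBids_pairwise {A : Finset (Fin n)} :
    (sortedBids f q B A).Pairwise (prec f q B) := by
  rw [List.pairwise_iff_forall_sublist]
  intro a b hsub
  have htrans : ∀ x y z : Fin n,
      (fun i j : Fin n => decide (density f q (B j) ≤ density f q (B i))) x y →
      (fun i j : Fin n => decide (density f q (B j) ≤ density f q (B i))) y z →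
      (fun i j : Fin n => decide (density f q (B j) ≤ density f q (B i))) x z := by
    intro x y z h1 h2
    simp only [decide_eq_true_eq] at *
    exact h2.trans h1
  have htotal : ∀ x y : Fin n,
      ((fun i j : Fin n => decide (density f q (B j) ≤ density f q (B i))) x y
      || (fun i j : Fin n => decide (density f q (B j) ≤ density f q (B i))) y x) := by
    intro x y
    simp only [Bool.or_eq_true, decide_eq_true_eq]
    exact le_total _ _
  have hsorted := List.pairwise_mergeSort htrans htotal (A.sort (· ≤ ·))
  have hle : density f q (B b) ≤ density f q (B a) := by
    have := List.pairwise_iff_forall_sublist.mp hsorted hsub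
    simpa using this
  have hnd : (sortedBids f q B A).Nodup := nodup_sortedBids
  have hne : a ≠ b := List.pairwise_iff_forall_sublist.mp hnd hsub
  rcases lt_or_eq_of_le hle with hlt | heq
  · exact Or.inl hlt
  · refine Or.inr ⟨heq.symm, ?_⟩
    by_contra hba
    have hba' : b < a := lt_of_le_of_ne (not_lt.mp hba) hne.symm
    have hmema : a ∈ A.sort (· ≤ ·) := by
      have : a ∈ sortedBids f q B A := hsub.subset (by simp)
      unfold sortedBids at this
      exact List.mem_mergeSort.mp this
    have hmemb : b ∈ A.sort (· ≤ ·) := by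
      have : b ∈ sortedBids f q B A := hsub.subset (by simp)
      unfold sortedBids at this
      exact List.mem_mergeSort.mp this
    have hsub0 : List.Sublist [b, a] (A.sort (· ≤ ·)) :=
      pair_sublist_of_sorted (A.pairwise_sort (· ≤ ·)) hmemb hmema hba'
    have hsub1 : List.Sublist [b, a] (sortedBids f q B A) := by
      unfold sortedBids
      exact List.pair_sublist_mergeSort htrans htotal
        (by simp [heq]) hsub0
    exact not_pair_sublist_both hnd hne hsub hsub1

/-- The greedy step function used by `grants`. -/
def stp (o : Fin k → ℝ) (s : Fin k → ℕ) (B : Fin n → Bid k) :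
    Finset (Fin n) → Fin n → Finset (Fin n) :=
  fun W j =>
    if (∀ i, (B j).1 i + ∑ j' ∈ W, (B j').1 i ≤ s i) ∧ ohat o (B j).1 ≤ (B j).2
    then insert j W else W

lemma grants_eq (o f : Fin k → ℝ) (s : Fin k → ℕ) (q : ℝ) (B : Fin n → Bid k)
    (A : Finset (Fin n)) :
    grants o f s q B A = (sortedBids f q B A).foldl (stp o s B) ∅ := rfl

lemma mem_foldl_stp : ∀ {l : List (Fin n)} {W₀ : Finset (Fin n)} {x : Fin n},
    x ∈ l.foldl (stp o s B) W₀ → x ∈ W₀ ∨ x ∈ l := by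
  intro l
  induction l with
  | nil => intro W₀ x hx; exact Or.inl hx
  | cons a t ih =>
    intro W₀ x hx
    rcases ih hx with h | h
    · unfold stp at h
      split at h
      · rcases Finset.mem_insert.mp h with rfl | h
        · exact Or.inr List.mem_cons_self
        · exact Or.inl h
      · exact Or.inl h
    · exact Or.inr (List.mem_cons_of_mem _ h)

lemma sum_foldl_le (i : Fin k) : ∀ {l : List (Fin n)} {W₀ : Finset (Fin n)},
    (∑ w ∈ W₀, (B w).1 i) ≤ s i →
    (∑ w ∈ l.foldl (stp o s B) W₀, (B w).1 i) ≤ s i := by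
  intro l
  induction l with
  | nil => intro W₀ h; exact h
  | cons a t ih =>
    intro W₀ h
    apply ih
    unfold stp
    split
    · rename_i hc
      by_cases haW : a ∈ W₀
      · rw [Finset.insert_eq_self.mpr haW]
        exact h
      · rw [Finset.sum_insert haW]
        exact hc.1 i
    · exact h

/-- The fixpoint characterization of the greedy run over a `prec`-sorted list. -/
lemma foldl_char : ∀ {l : List (Fin n)}, l.Pairwise (prec f q B) → ∀ x : Fin n,
    (x ∈ l.foldl (stp o s B) ∅ ↔ x ∈ l ∧ ohat o (B x).1 ≤ (B x).2 ∧
      ∀ i, (B x).1 i +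
        ∑ w ∈ (l.foldl (stp o s B) ∅).filter (fun w => prec f q B w x), (B w).1 i
        ≤ s i) := by
  intro l
  induction l using List.reverseRecOn with
  | nil => intro _ x; simp
  | append_singleton l' a ih =>
    intro hl x
    rw [List.pairwise_append] at hl
    obtain ⟨hl1, -, hla⟩ := hl
    have hla' : ∀ w ∈ l', prec f q B w a := fun w hw => hla w hw a (by simp)
    have hW : (l' ++ [a]).foldl (stp o s B) ∅
        = stp o s B (l'.foldl (stp o s B) ∅) a := by
      rw [List.foldl_append, List.foldl_cons, List.foldl_nil]
    set W' : Finset (Fin n) := l'.foldl (stp o s B) ∅ with hW'def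
    have hW'sub : ∀ w ∈ W', w ∈ l' := fun w hw =>
      (mem_foldl_stp hw).resolve_left (by simp)
    have hanotl' : a ∉ l' := fun h => prec_irrefl a (hla' a h)
    have hfiltW' : W'.filter (fun w => prec f q B w a) = W' :=
      Finset.filter_true_of_mem (fun w hw => hla' w (hW'sub w hw))
    rw [hW]
    by_cases hx : x = a
    · subst hx
      have hfilt : (stp o s B W' x).filter (fun w => prec f q B w x) = W' := by
        unfold stp
        split
        · rw [Finset.filter_insert, if_neg (prec_irrefl x), hfiltW']
        · exact hfiltW'
      rw [hfilt]
      unfold stp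
      split
      · rename_i hc
        exact iff_of_true (Finset.mem_insert_self _ _) ⟨by simp, hc.2, hc.1⟩
      · rename_i hc
        refine iff_of_false (fun h => hanotl' (hW'sub x h)) ?_
        rintro ⟨-, hrpc, harc⟩
        exact hc ⟨harc, hrpc⟩
    · have hmemW : x ∈ stp o s B W' a ↔ x ∈ W' := by
        unfold stp
        split
        · simp [Finset.mem_insert, hx]
        · exact Iff.rfl
      by_cases hxl : x ∈ l'
      · have hax : ¬ prec f q B a x := prec_asymm (hla' x hxl)
        have hfilt : (stp o s B W' a).filter (fun w => prec f q B w x)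
            = W'.filter (fun w => prec f q B w x) := by
          unfold stp
          split
          · rw [Finset.filter_insert, if_neg hax]
          · rfl
        rw [hmemW, hfilt]
        have hmem' : x ∈ l' ++ [a] ↔ x ∈ l' := by simp [hx]
        rw [hmem']
        exact ih hl1 x
      · refine iff_of_false (fun h => hxl (hW'sub x (hmemW.mp h))) ?_
        rintro ⟨hmem, -, -⟩
        rcases List.mem_append.mp hmem with h | h
        · exact hxl h
        · exact hx (by simpa using h)

lemma grants_char (A : Finset (Fin n)) (x : Fin n) :
    x ∈ grants o f s q B A ↔ x ∈ A ∧ ohat o (B x).1 ≤ (B x).2 ∧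
      ∀ i, (B x).1 i +
        ∑ w ∈ (grants o f s q B A).filter (fun w => prec f q B w x), (B w).1 i
        ≤ s i := by
  rw [grants_eq, foldl_char sortedBids_pairwise x, mem_sortedBids]

lemma grants_subset {A : Finset (Fin n)} {x : Fin n}
    (h : x ∈ grants o f s q B A) : x ∈ A :=
  ((grants_char (q := q) A x).mp h).1

lemma grants_sum_le (A : Finset (Fin n)) (i : Fin k) :
    ∑ w ∈ grants o f s q B A, (B w).1 i ≤ s i := by
  rw [grants_eq]
  exact sum_foldl_le i (by simp)

/-- Strong induction along the processing order. -/
lemma prec_strong_ind (P : Fin n → Prop)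
    (step : ∀ x, (∀ y, prec f q B y x → P y) → P x) : ∀ x, P x := by
  have key : ∀ (m : ℕ) (x : Fin n),
      (Finset.univ.filter (fun y => prec f q B y x)).card ≤ m → P x := by
    intro m
    induction m with
    | zero =>
      intro x hx
      refine step x fun y hy => ?_
      exfalso
      have hmem : y ∈ Finset.univ.filter (fun z => prec f q B z x) :=
        Finset.mem_filter.mpr ⟨Finset.mem_univ y, hy⟩
      rw [Finset.card_eq_zero.mp (Nat.le_zero.mp hx)] at hmem
      exact Finset.notMem_empty y hmem
    | succ m ih =>
      intro x hx
      refine step x fun y hy => ih y ?_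
      have hsub : (Finset.univ.filter (fun z => prec f q B z y))
          ⊆ (Finset.univ.filter (fun z => prec f q B z x)) := by
        intro z hz
        rw [Finset.mem_filter] at *
        exact ⟨hz.1, prec_trans hz.2 hy⟩
      have hss : (Finset.univ.filter (fun z => prec f q B z y))
          ⊂ (Finset.univ.filter (fun z => prec f q B z x)) := by
        refine ⟨hsub, fun hcon => ?_⟩
        have hy' : y ∈ Finset.univ.filter (fun z => prec f q B z x) :=
          Finset.mem_filter.mpr ⟨Finset.mem_univ y, hy⟩
        have := Finset.mem_filter.mp (hcon hy')
        exact prec_irrefl y this.2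
      have := Finset.card_lt_card hss
      omega
  exact fun x => key _ x le_rfl

lemma exists_prec_minimal {D : Finset (Fin n)} (hD : D.Nonempty) :
    ∃ c ∈ D, ∀ x ∈ D, ¬ prec f q B x c := by
  by_contra hcon
  push_neg at hcon
  obtain ⟨m, hm⟩ := hD
  have : ∀ x : Fin n, x ∉ D := by
    refine prec_strong_ind (f := f) (q := q) (B := B) _ (fun x ih hx => ?_)
    obtain ⟨y, hy, hyx⟩ := hcon x hx
    exact ih y hyx hy
  exact this m hm

lemma grants_congr {A : Finset (Fin n)} (h : ∀ x ∈ A, B x = B' x) :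
    grants o f s q B A = grants o f s q B' A := by
  have main : ∀ x, x ∈ grants o f s q B A ↔ x ∈ grants o f s q B' A := by
    refine prec_strong_ind (f := f) (q := q) (B := B') _ (fun x ih => ?_)
    by_cases hxA : x ∈ A
    · have hBx : B x = B' x := h x hxA
      have hprec : ∀ w, w ∈ A → (prec f q B w x ↔ prec f q B' w x) := by
        intro w hw
        unfold prec
        rw [h w hw, hBx]
      rw [grants_char A x, grants_char A x]
      have hfilter : (grants o f s q B A).filter (fun w => prec f q B w x)
          = (grants o f s q B' A).filter (fun w => prec f q B' w x) := by
        ext w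
        simp only [Finset.mem_filter]
        constructor
        · rintro ⟨hw, hp⟩
          have hwA := grants_subset hw
          have hp' := (hprec w hwA).mp hp
          exact ⟨(ih w hp').mp hw, hp'⟩
        · rintro ⟨hw, hp'⟩
          have hwA := grants_subset hw
          have hp := (hprec w hwA).mpr hp'
          exact ⟨(ih w hp').mpr hw, hp⟩
      have hsum : ∀ i, ∑ w ∈ (grants o f s q B A).filter (fun w => prec f q B w x),
            (B w).1 i
          = ∑ w ∈ (grants o f s q B' A).filter (fun w => prec f q B' w x),
            (B' w).1 i := by
        intro i
        rw [hfilter]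
        refine Finset.sum_congr rfl (fun w hw => ?_)
        rw [h w (grants_subset (Finset.mem_filter.mp hw).1)]
      constructor
      · rintro ⟨h1, h2, h3⟩
        refine ⟨h1, by rwa [← hBx], fun i => ?_⟩
        have := h3 i
        rwa [hsum i, hBx] at this
      · rintro ⟨h1, h2, h3⟩
        refine ⟨h1, by rwa [hBx], fun i => ?_⟩
        have := h3 i
        rwa [← hsum i, ← hBx] at this
    · exact iff_of_false (fun hc => hxA (grants_subset hc))
        (fun hc => hxA (grants_subset hc))
  exact Finset.ext main

/-- The run on all bids and the run without bid `j` agree strictly before `j`. -/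
lemma grants_erase_agree (j : Fin n) :
    ∀ x, prec f q B x j →
      (x ∈ grants o f s q B Finset.univ ↔
       x ∈ grants o f s q B (Finset.univ.erase j)) := by
  refine prec_strong_ind (f := f) (q := q) (B := B)
    (fun x => prec f q B x j → _) (fun x ih hxj => ?_)
  have hxne : x ≠ j := prec_ne hxj
  rw [grants_char, grants_char]
  have hfilter : (grants o f s q B Finset.univ).filter (fun w => prec f q B w x)
      = (grants o f s q B (Finset.univ.erase j)).filter (fun w => prec f q B w x) := by
    ext w
    simp only [Finset.mem_filter]
    constructor
    · rintro ⟨hw, hp⟩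
      exact ⟨(ih w hp (prec_trans hp hxj)).mp hw, hp⟩
    · rintro ⟨hw, hp⟩
      exact ⟨(ih w hp (prec_trans hp hxj)).mpr hw, hp⟩
  rw [hfilter]
  simp [Finset.mem_erase, hxne]

end GRPaux

/-- Lemma 2, the Greedy-RP pricing scheme determines critical-value
payments: for a winner `j ∈ W(B)` with GRP-P payment `p_j`, keeping the bundle
`d_j` and all the other bids fixed, reporting any valuation `v' > p_j` makes `j`
granted by GRP-A, while reporting any valuation `0 ≤ v' < p_j` makes `j` denied. -/
theorem grpP_critical_value {k n : ℕ} (hk : 1 ≤ k)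
    (f o : Fin k → ℝ) (hf : ∀ i, 0 < f i) (ho : ∀ i, 0 ≤ o i)
    (s : Fin k → ℕ) (q : ℝ) (hq : 0 < q)
    (B : Fin n → Bid k) (hB : ∀ i, validBid (B i))
    (j : Fin n) (hwin : j ∈ winners o f s q B) (v' : ℝ) :
    (payment o f s q B j < v' →
        j ∈ winners o f s q (Function.update B j ((B j).1, v'))) ∧
    (0 ≤ v' → v' < payment o f s q B j →
        j ∉ winners o f s q (Function.update B j ((B j).1, v'))) := by
  classical
  set B' : Fin n → Bid k := Function.update B j ((B j).1, v') with hB'def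
  have hB'j : B' j = ((B j).1, v') := Function.update_self _ _ _
  have hB'ne : ∀ x : Fin n, x ≠ j → B' x = B x := fun x hx =>
    Function.update_of_ne hx _ _
  obtain ⟨i0, hi0⟩ := (hB j).1
  have hdhat : 0 < dhat f (B j).1 := by
    apply Finset.sum_pos'
    · intro i _
      exact mul_nonneg (Nat.cast_nonneg _) (hf i).le
    · exact ⟨i0, Finset.mem_univ i0,
        mul_pos (by exact_mod_cast hi0) (hf i0)⟩
  have hdq : 0 < (dhat f (B j).1) ^ q := Real.rpow_pos_of_pos hdhat q
  have hpay : payment o f s q B j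
      = max (ecomp o f s q B j) (eres o f q (B j)) * (dhat f (B j).1) ^ q := by
    rw [payment, if_pos hwin]
  have heres : eres o f q (B j) * (dhat f (B j).1) ^ q = ohat o (B j).1 := by
    rw [eres, div_mul_cancel₀ _ (ne_of_gt hdq)]
  have hopay : ohat o (B j).1 ≤ payment o f s q B j := by
    rw [hpay, ← heres]
    exact mul_le_mul_of_nonneg_right (le_max_right _ _) hdq.le
  have hWg : winners o f s q B = grants o f s q B Finset.univ := rfl
  have hW'B' : grants o f s q B' (Finset.univ.erase j)
      = grants o f s q B (Finset.univ.erase j) :=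
    GRPaux.grants_congr (fun x hx => hB'ne x (Finset.ne_of_mem_erase hx))
  have hCS : competitorSet o f s q B j
      = grants o f s q B (Finset.univ.erase j) \ grants o f s q B Finset.univ := rfl
  constructor
  · -- raising the valuation above the payment keeps `j` granted
    intro hv
    show j ∈ grants o f s q B' Finset.univ
    rw [GRPaux.grants_char]
    refine ⟨Finset.mem_univ j, ?_, ?_⟩
    · rw [hB'j]
      exact hopay.trans hv.le
    intro i
    have hFsub : (grants o f s q B' Finset.univ).filter
          (fun w => GRPaux.prec f q B' w j)
        ⊆ (grants o f s q B Finset.univ).erase j := by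
      intro w hw
      obtain ⟨hw1, hwp⟩ := Finset.mem_filter.mp hw
      have hwne : w ≠ j := GRPaux.prec_ne hwp
      have hw' : w ∈ grants o f s q B (Finset.univ.erase j) := by
        rw [← hW'B']
        exact (GRPaux.grants_erase_agree j w hwp).mp hw1
      have hwW : w ∈ grants o f s q B Finset.univ := by
        by_contra hwW
        have hwS : w ∈ competitorSet o f s q B j := by
          rw [hCS]
          exact Finset.mem_sdiff.mpr ⟨hw', hwW⟩
        have hne : (competitorSet o f s q B j).Nonempty := ⟨w, hwS⟩
        have hecompeq : ecomp o f s q B j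
            = (competitorSet o f s q B j).sup' hne (fun i => density f q (B i)) :=
          dif_pos hne
        have hecomp : density f q (B w) ≤ ecomp o f s q B j := by
          rw [hecompeq]
          exact Finset.le_sup' (fun i => density f q (B i)) hwS
        have hdj : density f q (B' j) = v' / (dhat f (B j).1) ^ q := by
          rw [density, hB'j]
        have hmaxlt : max (ecomp o f s q B j) (eres o f q (B j))
            < density f q (B' j) := by
          rw [hdj, lt_div_iff₀ hdq, ← hpay]
          exact hv
        have hge : density f q (B' j) ≤ density f q (B' w) :=
          GRPaux.prec_density_le hwp
        rw [hB'ne w hwne] at hge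
        have hml := le_max_left (ecomp o f s q B j) (eres o f q (B j))
        linarith
      exact Finset.mem_erase.mpr ⟨hwne, hwW⟩
    have hsum : ∑ w ∈ (grants o f s q B' Finset.univ).filter
          (fun w => GRPaux.prec f q B' w j), (B' w).1 i
        = ∑ w ∈ (grants o f s q B' Finset.univ).filter
          (fun w => GRPaux.prec f q B' w j), (B w).1 i := by
      refine Finset.sum_congr rfl fun w hw => ?_
      rw [hB'ne w (Finset.mem_erase.mp (hFsub hw)).1]
    have h1 : ∑ w ∈ (grants o f s q B' Finset.univ).filter
          (fun w => GRPaux.prec f q B' w j), (B w).1 i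
        ≤ ∑ w ∈ (grants o f s q B Finset.univ).erase j, (B w).1 i :=
      Finset.sum_le_sum_of_subset hFsub
    have h2 : (B j).1 i + ∑ w ∈ (grants o f s q B Finset.univ).erase j, (B w).1 i
        = ∑ w ∈ grants o f s q B Finset.univ, (B w).1 i :=
      Finset.add_sum_erase _ (fun w => (B w).1 i) (show j ∈ grants o f s q B Finset.univ from hwin)
    have h3 : ∑ w ∈ grants o f s q B Finset.univ, (B w).1 i ≤ s i :=
      GRPaux.grants_sum_le _ i
    have hfst : (B' j).1 = (B j).1 := by rw [hB'j]
    rw [hfst, hsum]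
    omega
  · -- lowering the valuation below the payment makes `j` denied
    intro h0 hv hmem
    rw [show winners o f s q B' = grants o f s q B' Finset.univ from rfl] at hmem
    obtain ⟨-, hRPC, hARC⟩ := (GRPaux.grants_char Finset.univ j).mp hmem
    rw [hB'j] at hRPC
    have hvlt : v' < max (ecomp o f s q B j) (eres o f q (B j))
        * (dhat f (B j).1) ^ q := by
      rw [← hpay]; exact hv
    have heresle : eres o f q (B j) * (dhat f (B j).1) ^ q ≤ v' := by
      rw [heres]; exact hRPC
    have hereslt : eres o f q (B j)
        < max (ecomp o f s q B j) (eres o f q (B j)) :=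
      (mul_lt_mul_iff_left₀ hdq).mp (heresle.trans_lt hvlt)
    have hmaxeq : max (ecomp o f s q B j) (eres o f q (B j))
        = ecomp o f s q B j := by
      rcases max_cases (ecomp o f s q B j) (eres o f q (B j)) with h | h
      · exact h.1
      · rw [h.1] at hereslt
        exact absurd hereslt (lt_irrefl _)
    rw [hmaxeq] at hvlt
    have hSne : (competitorSet o f s q B j).Nonempty := by
      by_contra hS
      have : ecomp o f s q B j = 0 := dif_neg hS
      rw [this, zero_mul] at hvlt
      linarith
    -- the first index on which the two runs diverge
    have hDne : (Finset.univ.filter (fun x : Fin n => x ≠ j ∧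
        ¬(x ∈ grants o f s q B Finset.univ
          ↔ x ∈ grants o f s q B (Finset.univ.erase j)))).Nonempty := by
      obtain ⟨m, hm⟩ := hSne
      rw [hCS] at hm
      obtain ⟨hm1, hm2⟩ := Finset.mem_sdiff.mp hm
      have hmne : m ≠ j := (Finset.mem_erase.mp (GRPaux.grants_subset hm1)).1
      exact ⟨m, Finset.mem_filter.mpr ⟨Finset.mem_univ m, hmne,
        fun hiff => hm2 (hiff.mpr hm1)⟩⟩
    obtain ⟨c, hcD, hcmin⟩ :=
      GRPaux.exists_prec_minimal (f := f) (q := q) (B := B) hDne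
    obtain ⟨-, hcne, hciff⟩ := Finset.mem_filter.mp hcD
    have hagree : ∀ x, GRPaux.prec f q B x c → x ≠ j →
        (x ∈ grants o f s q B Finset.univ
          ↔ x ∈ grants o f s q B (Finset.univ.erase j)) := by
      intro x hp hxj
      by_contra hx
      exact hcmin x (Finset.mem_filter.mpr ⟨Finset.mem_univ x, hxj, hx⟩) hp
    have hprecjc : GRPaux.prec f q B j c := by
      rcases GRPaux.prec_total (f := f) (q := q) (B := B) (Ne.symm hcne) with h | h
      · exact h
      · exact absurd (GRPaux.grants_erase_agree j c h) hciff
    have hfsub1 : (grants o f s q B (Finset.univ.erase j)).filter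
          (fun w => GRPaux.prec f q B w c)
        ⊆ (grants o f s q B Finset.univ).filter
          (fun w => GRPaux.prec f q B w c) := by
      intro w hw
      obtain ⟨hw1, hp⟩ := Finset.mem_filter.mp hw
      have hwne : w ≠ j := (Finset.mem_erase.mp (GRPaux.grants_subset hw1)).1
      exact Finset.mem_filter.mpr ⟨(hagree w hp hwne).mpr hw1, hp⟩
    have hcerase : c ∈ Finset.univ.erase j :=
      Finset.mem_erase.mpr ⟨hcne, Finset.mem_univ c⟩
    have hcW' : c ∈ grants o f s q B (Finset.univ.erase j)
        ∧ c ∉ grants o f s q B Finset.univ := by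
      by_cases hcW : c ∈ grants o f s q B Finset.univ
      · exfalso
        have hcnW' : c ∉ grants o f s q B (Finset.univ.erase j) :=
          fun h => hciff ⟨fun _ => h, fun _ => hcW⟩
        obtain ⟨-, hrpc, harc⟩ := (GRPaux.grants_char Finset.univ c).mp hcW
        have hnot := hcnW'
        rw [GRPaux.grants_char (Finset.univ.erase j) c] at hnot
        push_neg at hnot
        obtain ⟨i, hi⟩ := hnot hcerase hrpc
        have hle : (∑ w ∈ (grants o f s q B (Finset.univ.erase j)).filter
              (fun w => GRPaux.prec f q B w c), (B w).1 i)
            ≤ ∑ w ∈ (grants o f s q B Finset.univ).filter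
              (fun w => GRPaux.prec f q B w c), (B w).1 i :=
          Finset.sum_le_sum_of_subset hfsub1
        have harci := harc i
        omega
      · refine ⟨?_, hcW⟩
        by_contra hcW'
        exact hciff (iff_of_false hcW hcW')
    obtain ⟨hcW', hcnW⟩ := hcW'
    have hrpc_c : ohat o (B c).1 ≤ (B c).2 :=
      ((GRPaux.grants_char (Finset.univ.erase j) c).mp hcW').2.1
    have hfail : ∃ i, s i < (B c).1 i + ((B j).1 i +
        ∑ w ∈ (grants o f s q B (Finset.univ.erase j)).filter
          (fun w => GRPaux.prec f q B w c), (B w).1 i) := by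
      have hnot := hcnW
      rw [GRPaux.grants_char Finset.univ c] at hnot
      push_neg at hnot
      obtain ⟨i, hi⟩ := hnot (Finset.mem_univ c) hrpc_c
      refine ⟨i, ?_⟩
      have hsub2 : (grants o f s q B Finset.univ).filter
            (fun w => GRPaux.prec f q B w c)
          ⊆ insert j ((grants o f s q B (Finset.univ.erase j)).filter
            (fun w => GRPaux.prec f q B w c)) := by
        intro w hw
        obtain ⟨hw1, hp⟩ := Finset.mem_filter.mp hw
        by_cases hwj : w = j
        · rw [hwj]
          exact Finset.mem_insert_self _ _
        · exact Finset.mem_insert_of_mem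
            (Finset.mem_filter.mpr ⟨(hagree w hp hwj).mp hw1, hp⟩)
      have hjnot : j ∉ (grants o f s q B (Finset.univ.erase j)).filter
          (fun w => GRPaux.prec f q B w c) := by
        intro h
        exact (Finset.mem_erase.mp
          (GRPaux.grants_subset (Finset.mem_filter.mp h).1)).1 rfl
      have hle : (∑ w ∈ (grants o f s q B Finset.univ).filter
            (fun w => GRPaux.prec f q B w c), (B w).1 i)
          ≤ ∑ w ∈ insert j ((grants o f s q B (Finset.univ.erase j)).filter
            (fun w => GRPaux.prec f q B w c)), (B w).1 i :=
        Finset.sum_le_sum_of_subset hsub2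
      rw [Finset.sum_insert hjnot] at hle
      omega
    have hcS : c ∈ competitorSet o f s q B j := by
      rw [hCS]
      exact Finset.mem_sdiff.mpr ⟨hcW', hcnW⟩
    have hecompeq : ecomp o f s q B j
        = (competitorSet o f s q B j).sup' hSne (fun i => density f q (B i)) :=
      dif_pos hSne
    have hdc_ge : ∀ m ∈ competitorSet o f s q B j,
        density f q (B m) ≤ density f q (B c) := by
      intro m hm
      have hm' := hm
      rw [hCS] at hm'
      obtain ⟨hm1, hm2⟩ := Finset.mem_sdiff.mp hm'
      have hmne : m ≠ j := (Finset.mem_erase.mp (GRPaux.grants_subset hm1)).1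
      have hmD : m ∈ Finset.univ.filter (fun x : Fin n => x ≠ j ∧
          ¬(x ∈ grants o f s q B Finset.univ
            ↔ x ∈ grants o f s q B (Finset.univ.erase j))) :=
        Finset.mem_filter.mpr ⟨Finset.mem_univ m, hmne,
          fun hiff => hm2 (hiff.mpr hm1)⟩
      have hnp := hcmin m hmD
      rcases eq_or_ne m c with rfl | hmc
      · exact le_refl _
      · rcases GRPaux.prec_total (f := f) (q := q) (B := B) hmc with h | h
        · exact absurd h hnp
        · exact GRPaux.prec_density_le h
    have hdceq : ecomp o f s q B j = density f q (B c) := by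
      rw [hecompeq]
      exact le_antisymm (Finset.sup'_le hSne _ hdc_ge)
        (Finset.le_sup' (fun i => density f q (B i)) hcS)
    rw [hdceq] at hvlt
    obtain ⟨i, hi⟩ := hfail
    have harcj := hARC i
    have hsubF : insert c ((grants o f s q B (Finset.univ.erase j)).filter
          (fun w => GRPaux.prec f q B w c))
        ⊆ (grants o f s q B' Finset.univ).filter
          (fun w => GRPaux.prec f q B' w j) := by
      intro w hw
      have hwW' : w ∈ grants o f s q B (Finset.univ.erase j) := by
        rcases Finset.mem_insert.mp hw with rfl | hw'
        · exact hcW'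
        · exact (Finset.mem_filter.mp hw').1
      have hdw : density f q (B c) ≤ density f q (B w) := by
        rcases Finset.mem_insert.mp hw with rfl | hw'
        · exact le_refl _
        · exact GRPaux.prec_density_le (Finset.mem_filter.mp hw').2
      have hwne : w ≠ j := (Finset.mem_erase.mp (GRPaux.grants_subset hwW')).1
      have hprec' : GRPaux.prec f q B' w j := by
        left
        rw [hB'ne w hwne]
        have hdj' : density f q (B' j) = v' / (dhat f (B j).1) ^ q := by
          rw [density, hB'j]
        rw [hdj', div_lt_iff₀ hdq]
        exact lt_of_lt_of_le hvlt (mul_le_mul_of_nonneg_right hdw hdq.le)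
      refine Finset.mem_filter.mpr ⟨?_, hprec'⟩
      refine (GRPaux.grants_erase_agree j w hprec').mpr ?_
      rw [hW'B']
      exact hwW'
    have hcnotf : c ∉ (grants o f s q B (Finset.univ.erase j)).filter
        (fun w => GRPaux.prec f q B w c) := by
      intro h
      exact GRPaux.prec_irrefl c (Finset.mem_filter.mp h).2
    have hle2 : (∑ w ∈ insert c ((grants o f s q B (Finset.univ.erase j)).filter
          (fun w => GRPaux.prec f q B w c)), (B' w).1 i)
        ≤ ∑ w ∈ (grants o f s q B' Finset.univ).filter
          (fun w => GRPaux.prec f q B' w j), (B' w).1 i :=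
      Finset.sum_le_sum_of_subset hsubF
    rw [Finset.sum_insert hcnotf] at hle2
    have hsum2 : ∑ w ∈ (grants o f s q B (Finset.univ.erase j)).filter
          (fun w => GRPaux.prec f q B w c), (B' w).1 i
        = ∑ w ∈ (grants o f s q B (Finset.univ.erase j)).filter
          (fun w => GRPaux.prec f q B w c), (B w).1 i := by
      refine Finset.sum_congr rfl fun w hw => ?_
      rw [hB'ne w (Finset.mem_erase.mp
        (GRPaux.grants_subset (Finset.mem_filter.mp hw).1)).1]
    have hB'c : (B' c).1 = (B c).1 := by rw [hB'ne c hcne]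
    have hB'j1 : (B' j).1 = (B j).1 := by rw [hB'j]
    rw [hsum2, hB'c] at hle2
    rw [hB'j1] at harcj
    omega


end
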